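/- Let (c_n)_{n≥1} be any sequence of positive real numbers with lim_{n→∞} c_n = 0. Then there exists a continuous function h : [0,1] → [0,∞) with h(0) = 0, h increasing, and x ↦ h(x)/x decreasing on (0,1], such that for all sufficiently large positive integers n: inf_{x ∈ (0,1)} (n·x + h(x)/x) ≥ c_n·√n. -/

import Mathlib

open Filter Set

noncomputable section

namespace Statement16Aux

/-- The generating set for our function `h`. -/
def S (c : ℕ → ℝ) (N : ℕ) (x : ℝ) : Set ℝ :=
  {v | ∃ m, N ≤ m ∧ v = min (c m * Real.sqrt m * x) (c m ^ 2)}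

/-- The function `h x = sup_{m ≥ N} min (c m √m x) (c m ^ 2)`. -/
def hfun (c : ℕ → ℝ) (N : ℕ) (x : ℝ) : ℝ := sSup (S c N x)

lemma mem_S (c : ℕ → ℝ) (N : ℕ) {m : ℕ} (hm : N ≤ m) (x : ℝ) :
    min (c m * Real.sqrt m * x) (c m ^ 2) ∈ S c N x := ⟨m, hm, rfl⟩

lemma S_nonempty (c : ℕ → ℝ) (N : ℕ) (x : ℝ) : (S c N x).Nonempty :=
  ⟨_, mem_S c N le_rfl x⟩

lemma S_bdd (c : ℕ → ℝ) (N : ℕ) (hc : ∀ m, N ≤ m → 0 < c m ∧ c m ≤ 1) (x : ℝ) :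
    BddAbove (S c N x) := by
  refine ⟨1, ?_⟩
  rintro v ⟨m, hm, rfl⟩
  have h1 := (hc m hm).1
  have h2 := (hc m hm).2
  have : c m ^ 2 ≤ 1 := by nlinarith
  exact le_trans (min_le_right _ _) this

lemma elem_nonneg (c : ℕ → ℝ) (N : ℕ) (hc : ∀ m, N ≤ m → 0 < c m ∧ c m ≤ 1)
    {x : ℝ} (hx : 0 ≤ x) {v : ℝ} (hv : v ∈ S c N x) : 0 ≤ v := by
  obtain ⟨m, hm, rfl⟩ := hv
  have h1 := (hc m hm).1
  have hs : 0 ≤ Real.sqrt m := Real.sqrt_nonneg _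
  exact le_min (by positivity) (by positivity)

lemma hfun_nonneg (c : ℕ → ℝ) (N : ℕ) (hc : ∀ m, N ≤ m → 0 < c m ∧ c m ≤ 1)
    {x : ℝ} (hx : 0 ≤ x) : 0 ≤ hfun c N x :=
  le_trans (elem_nonneg c N hc hx (mem_S c N le_rfl x))
    (le_csSup (S_bdd c N hc x) (mem_S c N le_rfl x))

lemma hfun_zero (c : ℕ → ℝ) (N : ℕ) (hc : ∀ m, N ≤ m → 0 < c m ∧ c m ≤ 1) :
    hfun c N 0 = 0 := by
  apply le_antisymm
  · apply csSup_le (S_nonempty c N 0)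
    rintro v ⟨m, hm, rfl⟩
    have h1 := (hc m hm).1
    have : c m * Real.sqrt m * 0 = 0 := by ring
    rw [this, min_eq_left (by positivity)]
  · exact hfun_nonneg c N hc le_rfl

lemma hfun_mono (c : ℕ → ℝ) (N : ℕ) (hc : ∀ m, N ≤ m → 0 < c m ∧ c m ≤ 1)
    {x y : ℝ} (hxy : x ≤ y) : hfun c N x ≤ hfun c N y := by
  apply csSup_le (S_nonempty c N x)
  rintro v ⟨m, hm, rfl⟩
  refine le_trans ?_ (le_csSup (S_bdd c N hc y) (mem_S c N hm y))
  refine min_le_min ?_ le_rfl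
  have ha0 : 0 ≤ c m * Real.sqrt m := mul_nonneg (hc m hm).1.le (Real.sqrt_nonneg _)
  nlinarith

lemma hfun_lip (c : ℕ → ℝ) (N : ℕ) (hc : ∀ m, N ≤ m → 0 < c m ∧ c m ≤ 1)
    {x y : ℝ} (hx : 0 < x) (hxy : x ≤ y) :
    hfun c N y ≤ hfun c N x + (y - x) / x := by
  apply csSup_le (S_nonempty c N y)
  rintro v ⟨m, hm, rfl⟩
  set a := c m * Real.sqrt m with ha
  have ha0 : 0 ≤ a := mul_nonneg (hc m hm).1.le (Real.sqrt_nonneg _)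
  have hb1 : c m ^ 2 ≤ 1 := by nlinarith [(hc m hm).1, (hc m hm).2]
  have hax : min (a * x) (c m ^ 2) ≤ hfun c N x :=
    le_csSup (S_bdd c N hc x) (mem_S c N hm x)
  have hdiv : 0 ≤ (y - x) / x := div_nonneg (by linarith) hx.le
  by_cases hcase : c m ^ 2 ≤ a * x
  · have hay : c m ^ 2 ≤ a * y := le_trans hcase (by nlinarith)
    rw [min_eq_right hay]
    rw [min_eq_right hcase] at hax
    linarith
  · push_neg at hcase
    have h1 : min (a * y) (c m ^ 2) ≤ a * y := min_le_left _ _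
    have h2 : min (a * x) (c m ^ 2) = a * x := min_eq_left hcase.le
    have hax1 : a * x ≤ 1 := le_trans hcase.le hb1
    have h3 : a * (y - x) ≤ (y - x) / x := by
      rw [le_div_iff₀ hx]
      nlinarith
    rw [h2] at hax
    nlinarith

lemma hfun_div_anti (c : ℕ → ℝ) (N : ℕ) (hc : ∀ m, N ≤ m → 0 < c m ∧ c m ≤ 1)
    {x y : ℝ} (hx : 0 < x) (hxy : x ≤ y) :
    hfun c N y / y ≤ hfun c N x / x := by
  have hy : 0 < y := lt_of_lt_of_le hx hxy
  have key : hfun c N y ≤ hfun c N x * (y / x) := by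
    apply csSup_le (S_nonempty c N y)
    rintro v ⟨m, hm, rfl⟩
    have ha0 : 0 ≤ c m * Real.sqrt m := mul_nonneg (hc m hm).1.le (Real.sqrt_nonneg _)
    have hb0 : 0 ≤ c m ^ 2 := sq_nonneg _
    have hr : 1 ≤ y / x := (one_le_div hx).2 hxy
    have step : min (c m * Real.sqrt m * y) (c m ^ 2)
        ≤ min (c m * Real.sqrt m * x) (c m ^ 2) * (y / x) := by
      have heq : min (c m * Real.sqrt m * x) (c m ^ 2) * (y / x)
          = min (c m * Real.sqrt m * x * (y / x)) (c m ^ 2 * (y / x)) :=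
        min_mul_of_nonneg _ _ (by positivity)
      have hxx : c m * Real.sqrt m * x * (y / x) = c m * Real.sqrt m * y := by
        field_simp
      rw [heq, hxx]
      exact min_le_min le_rfl (le_mul_of_one_le_right hb0 hr)
    refine le_trans step ?_
    exact mul_le_mul_of_nonneg_right (le_csSup (S_bdd c N hc x) (mem_S c N hm x))
      (by positivity)
  rw [div_le_div_iff₀ hy hx]
  calc hfun c N y * x ≤ hfun c N x * (y / x) * x :=
        mul_le_mul_of_nonneg_right key hx.le
    _ = hfun c N x * y := by field_simp
    _ = hfun c N x * y := rfl

lemma hfun_key (c : ℕ → ℝ) (N : ℕ) (hc : ∀ m, N ≤ m → 0 < c m ∧ c m ≤ 1)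
    {m : ℕ} (hm : N ≤ m) {x : ℝ} (hx : c m * Real.sqrt m * x ≤ c m ^ 2) :
    c m * Real.sqrt m * x ≤ hfun c N x :=
  le_trans (le_of_eq (min_eq_left hx).symm) (le_csSup (S_bdd c N hc x) (mem_S c N hm x))

lemma hfun_small (c : ℕ → ℝ) (N : ℕ) (hc : ∀ m, N ≤ m → 0 < c m ∧ c m ≤ 1)
    {M : ℕ} (hM : N ≤ M) (hM1 : 1 ≤ M) {ε : ℝ}
    (hε : ∀ m, M ≤ m → c m ^ 2 ≤ ε) {x : ℝ} (hx0 : 0 ≤ x) (hx : (M : ℝ) * x ≤ ε) :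
    hfun c N x ≤ ε := by
  apply csSup_le (S_nonempty c N x)
  rintro v ⟨m, hm, rfl⟩
  rcases le_or_gt M m with h | h
  · exact le_trans (min_le_right _ _) (hε m h)
  · have h2 := (hc m hm).2
    have h1 := (hc m hm).1
    have hs0 : 0 ≤ Real.sqrt m := Real.sqrt_nonneg _
    have hs : Real.sqrt m ≤ (M : ℝ) := by
      have hle : Real.sqrt m ≤ Real.sqrt M := Real.sqrt_le_sqrt (by exact_mod_cast h.le)
      have hMs : Real.sqrt M ≤ (M : ℝ) := by
        have h1 : (M : ℝ) ≤ (M : ℝ) ^ 2 := by nlinarith [(Nat.one_le_cast (α := ℝ)).2 hM1]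
        calc Real.sqrt M ≤ Real.sqrt ((M : ℝ) ^ 2) := Real.sqrt_le_sqrt h1
          _ = (M : ℝ) := Real.sqrt_sq (by positivity)
      linarith
    refine le_trans (min_le_left _ _) ?_
    have hcm : c m * Real.sqrt m ≤ (M : ℝ) := by nlinarith
    have : c m * Real.sqrt m * x ≤ (M : ℝ) * x := mul_le_mul_of_nonneg_right hcm hx0
    linarith

end Statement16Aux

open Statement16Aux

/-- For any positive sequence `(c n)` tending to `0`, there is a continuous
function `h : [0,1] → [0,∞)` with `h 0 = 0`, `h` increasing and `x ↦ h x / x` decreasing on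
`(0,1]`, such that for all sufficiently large `n`,
`inf_{x ∈ (0,1)} (n·x + h x / x) ≥ c n · √n`. -/
theorem statement16 (c : ℕ → ℝ) (hpos : ∀ n : ℕ, 1 ≤ n → 0 < c n)
    (hlim : Filter.Tendsto c Filter.atTop (nhds 0)) :
    ∃ h : ℝ → ℝ, ContinuousOn h (Set.Icc 0 1) ∧ h 0 = 0 ∧
      (∀ x ∈ Set.Icc (0 : ℝ) 1, 0 ≤ h x) ∧
      MonotoneOn h (Set.Icc 0 1) ∧
      AntitoneOn (fun x => h x / x) (Set.Ioc 0 1) ∧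
      ∃ N : ℕ, ∀ n : ℕ, N ≤ n →
        ∀ x ∈ Set.Ioo (0 : ℝ) 1, c n * Real.sqrt n ≤ (n : ℝ) * x + h x / x := by
  -- get N' with c n < 1 for n ≥ N'
  have hev : ∀ᶠ n in atTop, c n < 1 := hlim.eventually_lt_const one_pos
  obtain ⟨N', hN'⟩ := eventually_atTop.1 hev
  set N₀ : ℕ := max N' 1 with hN₀
  have hN₀1 : 1 ≤ N₀ := le_max_right _ _
  have hc : ∀ m, N₀ ≤ m → 0 < c m ∧ c m ≤ 1 := by
    intro m hm
    exact ⟨hpos m (le_trans (le_max_right _ _) hm),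
      (hN' m (le_trans (le_max_left _ _) hm)).le⟩
  refine ⟨hfun c N₀, ?_, hfun_zero c N₀ hc, fun x hx => hfun_nonneg c N₀ hc hx.1,
    fun x hx y hy hxy => hfun_mono c N₀ hc hxy,
    fun x hx y hy hxy => hfun_div_anti c N₀ hc hx.1 hxy, N₀, ?_⟩
  · -- continuity
    intro x0 hx0
    rcases eq_or_lt_of_le hx0.1 with heq | hp
    · -- at 0
      have hx00 : x0 = 0 := heq.symm
      subst hx00
      unfold ContinuousWithinAt
      rw [hfun_zero c N₀ hc]
      rw [Metric.tendsto_nhdsWithin_nhds]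
      intro ε hε
      obtain ⟨M₁, hM₁⟩ := eventually_atTop.1 (hlim.eventually_lt_const (half_pos hε))
      set M : ℕ := max M₁ N₀ with hM
      have hM1 : 1 ≤ M := le_trans hN₀1 (le_max_right _ _)
      have hε2 : ∀ m, M ≤ m → c m ^ 2 ≤ ε / 2 := by
        intro m hm
        have h1 := (hc m (le_trans (le_max_right _ _) hm)).1
        have h2 := (hc m (le_trans (le_max_right _ _) hm)).2
        have h3 := hM₁ m (le_trans (le_max_left _ _) hm)
        nlinarith
      have hMpos : (0 : ℝ) < M := by exact_mod_cast hM1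
      refine ⟨(ε / 2) / M, by positivity, ?_⟩
      intro x hx hd
      rw [Real.dist_eq, sub_zero] at hd ⊢
      have hxx : x ≤ (ε / 2) / M := by
        rw [abs_lt] at hd; linarith [hd.2]
      have hsmall : hfun c N₀ x ≤ ε / 2 := by
        refine hfun_small c N₀ hc (le_max_right _ _) hM1 hε2 hx.1 ?_
        rw [le_div_iff₀ hMpos] at hxx
        nlinarith
      have hnn := hfun_nonneg c N₀ hc hx.1
      rw [abs_of_nonneg hnn]
      linarith
    · -- at x0 > 0
      unfold ContinuousWithinAt
      rw [Metric.tendsto_nhdsWithin_nhds]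
      intro ε hε
      refine ⟨min (x0 / 2) (ε * x0 / 4), by positivity, ?_⟩
      intro x hx hd
      rw [Real.dist_eq] at hd ⊢
      rw [abs_lt] at hd
      have hxpos : x0 / 2 < x := by
        have := hd.1
        have h1 : min (x0 / 2) (ε * x0 / 4) ≤ x0 / 2 := min_le_left _ _
        linarith
      have hδ2 : |x - x0| < ε * x0 / 4 := by
        rw [abs_lt]
        have h2 : min (x0 / 2) (ε * x0 / 4) ≤ ε * x0 / 4 := min_le_right _ _
        constructor <;> [linarith [hd.1]; linarith [hd.2]]
      rw [abs_lt] at hδ2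
      rw [abs_lt]
      rcases le_or_gt x x0 with hle | hlt
      · have hmono := hfun_mono c N₀ hc hle
        have hlip := hfun_lip c N₀ hc (by linarith : (0:ℝ) < x) hle
        have hb : (x0 - x) / x < ε := by
          rw [div_lt_iff₀ (by linarith : (0:ℝ) < x)]
          nlinarith [hδ2.1]
        constructor <;> linarith
      · have hmono := hfun_mono c N₀ hc hlt.le
        have hlip := hfun_lip c N₀ hc hp hlt.le
        have hb : (x - x0) / x0 < ε := by
          rw [div_lt_iff₀ hp]
          nlinarith [hδ2.2]
        constructor <;> linarith
  · -- key estimate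
    intro n hn x hx
    have hc' := hc n hn
    have hn1 : 1 ≤ n := le_trans hN₀1 hn
    have hnpos : (0 : ℝ) < n := by exact_mod_cast hn1
    have hs : 0 < Real.sqrt n := Real.sqrt_pos.2 hnpos
    have hnn : Real.sqrt n * Real.sqrt n = (n : ℝ) := Real.mul_self_sqrt hnpos.le
    have hdiv0 : 0 ≤ hfun c N₀ x / x := div_nonneg (hfun_nonneg c N₀ hc hx.1.le) hx.1.le
    rcases le_or_gt (c n / Real.sqrt n) x with h | h
    · rw [div_le_iff₀ hs] at h
      have : c n * Real.sqrt n ≤ (n : ℝ) * x := by nlinarith [hx.1]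
      linarith
    · rw [lt_div_iff₀ hs] at h
      have hbb : c n * Real.sqrt n * x ≤ c n ^ 2 := by nlinarith [hc'.1]
      have hk := hfun_key c N₀ hc hn hbb
      have hineq : c n * Real.sqrt n ≤ hfun c N₀ x / x := by
        rw [le_div_iff₀ hx.1]
        linarith
      nlinarith [mul_nonneg hnpos.le hx.1.le]
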